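/- arXiv:2209.10137 — 6 statements merged into one kernel-verified Lean document; each statement's English description precedes it below -/
import Mathlib

section
/- If (q,t) is a symmetric mechanism on the strict type space D^H ⊆ [v̲,v̄]^n that is incentive compatible, then (q,t) is rank-preserving: for every strict type v and all indices i,j, if v_i > v_j then q_i(v) ≥ q_j(v). -/
open Finset

noncomputable section

/-- Dot product of two vectors in ℝ^n. -/
def dot {n : ℕ} (v w : Fin n → ℝ) : ℝ := ∑ i, v i * w i

/-- Strict type space: vectors in [vlo, vhi]^n with pairwise distinct coordinates. -/
def DH (n : ℕ) (vlo vhi : ℝ) : Set (Fin n → ℝ) :=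
  {v | (∀ i, v i ∈ Set.Icc vlo vhi) ∧ Function.Injective v}

/-- Incentive compatibility on a set of types. -/
def IC {n : ℕ} (D : Set (Fin n → ℝ)) (q : (Fin n → ℝ) → Fin n → ℝ)
    (t : (Fin n → ℝ) → ℝ) : Prop :=
  ∀ v ∈ D, ∀ v' ∈ D, dot v (q v) - t v ≥ dot v (q v') - t v'

/-- Symmetry of a mechanism: q_i(v^σ) = q_{σ(i)}(v) and t(v^σ) = t(v),
where (v^σ)_j = v_{σ(j)}. -/
def Symmetric' {n : ℕ} (D : Set (Fin n → ℝ)) (q : (Fin n → ℝ) → Fin n → ℝ)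
    (t : (Fin n → ℝ) → ℝ) : Prop :=
  ∀ v ∈ D, ∀ σ : Equiv.Perm (Fin n), (∀ i, q (v ∘ σ) i = q v (σ i)) ∧ t (v ∘ σ) = t v

/-- A symmetric IC mechanism on the strict type space is rank-preserving. -/
theorem symmetric_IC_implies_rank_preserving
    (n : ℕ) (vlo vhi : ℝ)
    (q : (Fin n → ℝ) → Fin n → ℝ) (t : (Fin n → ℝ) → ℝ)
    (hq01 : ∀ v ∈ DH n vlo vhi, ∀ i, q v i ∈ Set.Icc (0:ℝ) 1)
    (hsym : Symmetric' (DH n vlo vhi) q t)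
    (hIC : IC (DH n vlo vhi) q t) :
    ∀ v ∈ DH n vlo vhi, ∀ i j, v i > v j → q v i ≥ q v j := by
  intro v hv i j hij
  have hij' : i ≠ j := fun h => by simp [h] at hij
  set σ := Equiv.swap i j with hσ
  have hvσ : v ∘ σ ∈ DH n vlo vhi := by
    obtain ⟨hb, hinj⟩ := hv
    exact ⟨fun k => hb (σ k), hinj.comp σ.injective⟩
  have hs := hsym v hv σ
  have hic := hIC v hv (v ∘ σ) hvσ
  rw [hs.2] at hic
  have key : dot v (q v) ≥ dot v (q (v ∘ σ)) := by linarith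
  have hqeq : dot v (q (v ∘ σ)) = ∑ k, v k * q v (σ k) := by
    unfold dot; exact Finset.sum_congr rfl (fun k _ => by rw [hs.1 k])
  have hdiff : dot v (q v) - dot v (q (v ∘ σ)) = (v i - v j) * (q v i - q v j) := by
    rw [hqeq]
    unfold dot
    rw [← Finset.sum_sub_distrib]
    have : ∀ k ∈ Finset.univ, k ∉ ({i, j} : Finset (Fin n)) →
        v k * q v k - v k * q v (σ k) = 0 := by
      intro k _ hk
      simp only [Finset.mem_insert, Finset.mem_singleton, not_or] at hk
      rw [hσ, Equiv.swap_apply_of_ne_of_ne hk.1 hk.2]; ring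
    rw [← Finset.sum_subset (Finset.subset_univ {i, j}) this,
        Finset.sum_pair hij']
    simp [hσ, Equiv.swap_apply_left, Equiv.swap_apply_right]
    ring
  nlinarith [key, hdiff]
end
end

section
/- Let (q,t) be a symmetric, rank-preserving mechanism on D^H such that its restriction to the cone D(σ^I) = {v : v_1 > v_2 > … > v_n} is incentive compatible. Then (q,t) is incentive compatible on all of D^H. -/
open Finset

noncomputable section

/-- The cone D(σ^I) of strictly decreasing strict types. -/
def DconeI (n : ℕ) (vlo vhi : ℝ) : Set (Fin n → ℝ) :=
  {v | v ∈ DH n vlo vhi ∧ ∀ i j : Fin n, i < j → v i > v j}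

def RankPreserving {n : ℕ} (D : Set (Fin n → ℝ))
    (q : (Fin n → ℝ) → Fin n → ℝ) : Prop :=
  ∀ v ∈ D, ∀ i j : Fin n, v i > v j → q v i ≥ q v j

/-- Any injective tuple can be sorted in strictly decreasing order. -/
lemma exists_sorting_perm {n : ℕ} (v : Fin n → ℝ) (hv : Function.Injective v) :
    ∃ σ : Equiv.Perm (Fin n), ∀ i j : Fin n, i < j → v (σ i) > v (σ j) := by
  have hmono : Monotone (v ∘ Tuple.sort v) := Tuple.monotone_sort v
  have hsm : StrictMono (v ∘ Tuple.sort v) :=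
    hmono.strictMono_of_injective (hv.comp (Tuple.sort v).injective)
  refine ⟨(Fin.revPerm).trans (Tuple.sort v), fun i j hij => ?_⟩
  have : Fin.rev j < Fin.rev i := by simpa using (Fin.rev_lt_rev).2 hij
  simpa using hsm this

/-- Membership of the sorted vector in the cone. -/
lemma sorted_mem_cone {n : ℕ} {vlo vhi : ℝ} {v : Fin n → ℝ}
    (hv : v ∈ DH n vlo vhi) (σ : Equiv.Perm (Fin n))
    (hσ : ∀ i j : Fin n, i < j → v (σ i) > v (σ j)) :
    (v ∘ σ) ∈ DconeI n vlo vhi := by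
  refine ⟨⟨fun i => hv.1 (σ i), hv.2.comp σ.injective⟩, hσ⟩

/-- A symmetric, rank-preserving mechanism that is IC on the
decreasing cone D(σ^I) is IC on all of D^H. -/
theorem symmetric_rank_preserving_coneIC_implies_IC
    (n : ℕ) (vlo vhi : ℝ)
    (q : (Fin n → ℝ) → Fin n → ℝ) (t : (Fin n → ℝ) → ℝ)
    (hq01 : ∀ v ∈ DH n vlo vhi, ∀ i, q v i ∈ Set.Icc (0:ℝ) 1)
    (hsym : Symmetric' (DH n vlo vhi) q t)
    (hrp : RankPreserving (DH n vlo vhi) q)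
    (hICcone : IC (DconeI n vlo vhi) q t) :
    IC (DH n vlo vhi) q t := by
  intro v hv v' hv'
  obtain ⟨σ, hσ⟩ := exists_sorting_perm v hv.2
  obtain ⟨τ, hτ⟩ := exists_sorting_perm v' hv'.2
  have hw := sorted_mem_cone hv σ hσ
  have hw' := sorted_mem_cone hv' τ hτ
  have hIC := hICcone (v ∘ σ) hw (v' ∘ τ) hw'
  obtain ⟨hqσ, htσ⟩ := hsym v hv σ
  obtain ⟨hqτ, htτ⟩ := hsym v' hv' τ
  -- rewrite dot (v∘σ) (q (v∘σ)) = dot v (q v)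
  have h1 : dot (v ∘ σ) (q (v ∘ σ)) = dot v (q v) := by
    unfold dot
    rw [← Equiv.sum_comp σ (fun i => v i * q v i)]
    exact Finset.sum_congr rfl fun i _ => by simp [hqσ i]
  -- dot (v∘σ) (q (v'∘τ)) = ∑ v(σ i) * q v' (τ i)
  have h2 : dot (v ∘ σ) (q (v' ∘ τ)) = ∑ i, v (σ i) * q v' (τ i) :=
    Finset.sum_congr rfl fun i _ => by simp [hqτ i]
  -- rearrangement: dot v (q v') ≤ ∑ v(σ i) * q v' (τ i)
  have h3 : dot v (q v') ≤ ∑ i, v (σ i) * q v' (τ i) := by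
    have hmono : Monovary (fun i => v (σ i)) (fun i => q v' (τ i)) := by
      intro i j hb
      rcases lt_trichotomy i j with h | h | h
      · exact absurd (hrp v' hv' (τ i) (τ j) (hτ i j h)) (not_le.2 hb)
      · simp [h]
      · exact le_of_lt (hσ j i h)
    have := hmono.sum_mul_comp_perm_le_sum_mul (σ := σ.trans τ.symm)
    calc dot v (q v') = ∑ i, v (σ i) * q v' (σ i) := by
          unfold dot; rw [← Equiv.sum_comp σ (fun i => v i * q v' i)]
      _ = ∑ i, v (σ i) * q v' (τ ((σ.trans τ.symm) i)) := by
          apply Finset.sum_congr rfl; intro i _; simp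
      _ ≤ ∑ i, v (σ i) * q v' (τ i) := this
  rw [h1, htσ, htτ, h2] at hIC
  linarith

end
end

section
/- Let (q,t) be an IC mechanism on the decreasing domain D^I = {v ∈ [v̲,v̄]^n : v_1 ≥ v_2 ≥ … ≥ v_n}, where additionally q_1(v) ≥ q_2(v) ≥ … ≥ q_n(v) for every v. If q(v̂) weakly majorizes q(v), i.e., ∑_{i=1}^j q_i(v̂) ≥ ∑_{i=1}^j q_i(v) for all j = 1,…,n, then t(v̂) ≥ t(v). -/
open Finset

noncomputable section

/-- Decreasing type space: vectors in [vlo, vhi]^n with decreasing coordinates. -/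
def DI (n : ℕ) (vlo vhi : ℝ) : Set (Fin n → ℝ) :=
  {v | (∀ i, v i ∈ Set.Icc vlo vhi) ∧ ∀ i j : Fin n, i ≤ j → v i ≥ v j}

lemma sum_Iic_fin (n : ℕ) (c : Fin n → ℝ) (j : Fin n) (g : ℕ → ℝ)
    (hg : ∀ i : Fin n, g i.1 = c i) :
    ∑ i ∈ Finset.Iic j, c i = ∑ i ∈ Finset.range (j.1+1), g i := by
  rw [Finset.sum_bij' (fun (i : Fin n) _ => i.1)
    (fun i hi => (⟨i, Nat.lt_of_lt_of_le (Finset.mem_range.mp hi) j.2⟩ : Fin n))]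
  · intro a ha; simp only [Finset.mem_Iic] at ha; simp [Nat.lt_succ_iff, Fin.le_def.mp ha]
  · intro a ha; simp only [Finset.mem_range, Nat.lt_succ_iff] at ha; simp [Finset.mem_Iic, Fin.le_def, ha]
  · intros; rfl
  · intros; rfl
  · intro a ha; exact (hg a).symm

lemma abel_nonneg (n : ℕ) (f g : ℕ → ℝ)
    (hfdec : ∀ i j, i ≤ j → j < n → f j ≤ f i)
    (hf0 : ∀ i, i < n → 0 ≤ f i)
    (hpart : ∀ j, j < n → 0 ≤ ∑ i ∈ Finset.range (j+1), g i) :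
    0 ≤ ∑ i ∈ Finset.range n, f i * g i := by
  rcases Nat.eq_zero_or_pos n with h | h
  · simp [h]
  have := Finset.sum_range_by_parts f g n
  simp only [smul_eq_mul] at this
  rw [this]
  have h1 : 0 ≤ f (n-1) * ∑ i ∈ Finset.range n, g i := by
    apply mul_nonneg (hf0 _ (Nat.sub_lt h one_pos))
    have := hpart (n-1) (Nat.sub_lt h one_pos)
    have e : n - 1 + 1 = n := by omega
    rwa [e] at this
  have h2 : ∑ i ∈ Finset.range (n-1), (f (i+1) - f i) * ∑ j ∈ Finset.range (i+1), g j ≤ 0 := by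
    apply Finset.sum_nonpos
    intro i hi
    simp only [Finset.mem_range] at hi
    have hi' : i + 1 < n := by omega
    apply mul_nonpos_of_nonpos_of_nonneg
    · linarith [hfdec i (i+1) (Nat.le_succ i) hi']
    · exact hpart i (by omega)
  linarith

/-- for an IC mechanism on the decreasing domain with decreasing
allocation vectors, weak majorization of allocations implies ordering of payments. -/
theorem weak_majorization_implies_payment_order
    (n : ℕ) (vlo vhi : ℝ) (hvlo : 0 ≤ vlo)
    (q : (Fin n → ℝ) → Fin n → ℝ) (t : (Fin n → ℝ) → ℝ)
    (hq01 : ∀ v ∈ DI n vlo vhi, ∀ i, q v i ∈ Set.Icc (0:ℝ) 1)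
    (hqdec : ∀ v ∈ DI n vlo vhi, ∀ i j : Fin n, i ≤ j → q v i ≥ q v j)
    (hIC : IC (DI n vlo vhi) q t)
    (v vhat : Fin n → ℝ) (hv : v ∈ DI n vlo vhi) (hvhat : vhat ∈ DI n vlo vhi)
    (hmaj : ∀ j : Fin n, ∑ i ∈ Finset.Iic j, q vhat i ≥ ∑ i ∈ Finset.Iic j, q v i) :
    t vhat ≥ t v := by
  have hic := hIC v hv vhat hvhat
  have key : 0 ≤ dot v (q vhat) - dot v (q v) := by
    set f : ℕ → ℝ := fun i => if h : i < n then v ⟨i, h⟩ else 0 with hf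
    set g : ℕ → ℝ := fun i => if h : i < n then q vhat ⟨i, h⟩ - q v ⟨i, h⟩ else 0 with hg
    have hsum : dot v (q vhat) - dot v (q v) = ∑ i ∈ Finset.range n, f i * g i := by
      unfold dot
      rw [← Finset.sum_sub_distrib, ← Fin.sum_univ_eq_sum_range (fun i => f i * g i) n]
      apply Finset.sum_congr rfl
      intro i _
      simp only [hf, hg, dif_pos i.2]
      ring
    rw [hsum]
    apply abel_nonneg
    · intro i j hij hjn
      simp only [hf, dif_pos hjn, dif_pos (lt_of_le_of_lt hij hjn)]
      exact hv.2 ⟨i, _⟩ ⟨j, hjn⟩ hij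
    · intro i hin
      simp only [hf, dif_pos hin]
      exact le_trans hvlo (hv.1 ⟨i, hin⟩).1
    · intro j hjn
      have := hmaj ⟨j, hjn⟩
      have e : ∑ i ∈ Finset.Iic (⟨j, hjn⟩ : Fin n), (q vhat i - q v i)
          = ∑ i ∈ Finset.range (j+1), g i := by
        apply sum_Iic_fin
        intro i; simp [hg, dif_pos i.2]
      rw [Finset.sum_sub_distrib] at e
      have : 0 ≤ ∑ i ∈ Finset.Iic (⟨j, hjn⟩ : Fin n), q vhat i
          - ∑ i ∈ Finset.Iic (⟨j, hjn⟩ : Fin n), q v i := by linarith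
      linarith [e ▸ this]
  linarith
end
end

section
/- Let u : D^I → ℝ be convex, v ∈ D^I, i an index, v'_i ≠ v_i with (v'_i, v_{−i}) ∈ D^I. If x is a subgradient of u at v and some y with y_i = x_i is a subgradient of u at (v'_i, v_{−i}), then x is also a subgradient of u at (v'_i, v_{−i}) and y is also a subgradient of u at v. -/
open Finset

noncomputable section

/-- x is a subgradient of u at v relative to the domain D. -/
def Subgradient {n : ℕ} (D : Set (Fin n → ℝ)) (u : (Fin n → ℝ) → ℝ)
    (v x : Fin n → ℝ) : Prop :=
  ∀ v' ∈ D, u v' - u v ≥ dot x (fun i => v' i - v i)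

lemma dot_update {n : ℕ} (z v : Fin n → ℝ) (i : Fin n) (c : ℝ) :
    dot z (fun j => Function.update v i c j - v j) = z i * (c - v i) := by
  unfold dot
  rw [Finset.sum_eq_single i]
  · simp
  · intro j _ hj
    simp [Function.update_of_ne hj]
  · simp

lemma dot_sub {n : ℕ} (z a b w : Fin n → ℝ) :
    dot z (fun j => a j - w j) =
      dot z (fun j => a j - b j) + dot z (fun j => b j - w j) := by
  unfold dot
  rw [← Finset.sum_add_distrib]
  congr 1; ext j; ring

/-- subgradients with equal i-th coordinate at two types differing
only in coordinate i can be swapped. -/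
theorem subgradient_swap
    (n : ℕ) (D : Set (Fin n → ℝ)) (hD : Convex ℝ D)
    (u : (Fin n → ℝ) → ℝ) (hu : ConvexOn ℝ D u)
    (v : Fin n → ℝ) (hv : v ∈ D)
    (i : Fin n) (c : ℝ) (hc : c ≠ v i)
    (hv' : Function.update v i c ∈ D)
    (x y : Fin n → ℝ)
    (hx : Subgradient D u v x)
    (hy : Subgradient D u (Function.update v i c) y)
    (hxy : y i = x i) :
    Subgradient D u (Function.update v i c) x ∧ Subgradient D u v y := by
  set w := Function.update v i c with hw
  have h1 := hx w hv'
  have h2 := hy v hv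
  rw [dot_update x v i c] at h1
  have hdv : dot y (fun j => v j - w j) = - (x i * (c - v i)) := by
    have : dot y (fun j => v j - w j) = - dot y (fun j => w j - v j) := by
      unfold dot; rw [← Finset.sum_neg_distrib]; congr 1; ext j; ring
    rw [this, dot_update y v i c, hxy]
  rw [hdv] at h2
  have key : u w - u v = x i * (c - v i) := by linarith
  constructor
  · intro v' hv'mem
    have h3 := hx v' hv'mem
    have : dot x (fun j => v' j - w j)
        = dot x (fun j => v' j - v j) + dot x (fun j => v j - w j) := by
      rw [dot_sub x v' v w]
    have hvw : dot x (fun j => v j - w j) = - (x i * (c - v i)) := by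
      have : dot x (fun j => v j - w j) = - dot x (fun j => w j - v j) := by
        unfold dot; rw [← Finset.sum_neg_distrib]; congr 1; ext j; ring
      rw [this, dot_update x v i c]
    rw [this, hvw]
    simp only [ge_iff_le] at *
    linarith
  · intro v' hv'mem
    have h3 := hy v' hv'mem
    have hsplit : dot y (fun j => v' j - v j)
        = dot y (fun j => v' j - w j) + dot y (fun j => w j - v j) := by
      rw [dot_sub y v' w v]
    have hwy : dot y (fun j => w j - v j) = x i * (c - v i) := by
      rw [dot_update y v i c, hxy]
    rw [hsplit, hwy]
    simp only [ge_iff_le] at *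
    linarith
end
end

section
/- Let (q,t) be an IC and IR mechanism on the strict type space D^M (a dense subset of the compact box D̄^M = [v̲,v̄]^n, or of the decreasing box), with payments bounded below. Then there exists an IC and IR mechanism (q̄, t̄) on all of D̄^M that agrees with (q,t) on D^M. -/
open Finset

open Filter Topology

noncomputable section

def IR {n : ℕ} (D : Set (Fin n → ℝ)) (q : (Fin n → ℝ) → Fin n → ℝ)
    (t : (Fin n → ℝ) → ℝ) : Prop :=
  ∀ v ∈ D, dot v (q v) - t v ≥ 0

/-- an IC and IR mechanism with bounded payments on a dense subset D
of a compact type space D̄ extends to an IC and IR mechanism on all of D̄. -/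
theorem extension_to_closure
    (n : ℕ) (Dbar D : Set (Fin n → ℝ))
    (hsub : D ⊆ Dbar)
    (hcompact : IsCompact Dbar)
    (hdense : Dbar ⊆ closure D)
    (q : (Fin n → ℝ) → Fin n → ℝ) (t : (Fin n → ℝ) → ℝ)
    (hq01 : ∀ v ∈ D, ∀ i, q v i ∈ Set.Icc (0:ℝ) 1)
    (C vlo : ℝ) (htbdd : ∀ v ∈ D, t v ∈ Set.Icc vlo C)
    (hIC : IC D q t) (hIR : IR D q t) :
    ∃ (qbar : (Fin n → ℝ) → Fin n → ℝ) (tbar : (Fin n → ℝ) → ℝ),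
      (∀ v ∈ Dbar, ∀ i, qbar v i ∈ Set.Icc (0:ℝ) 1) ∧
      IC Dbar qbar tbar ∧ IR Dbar qbar tbar ∧
      (∀ v ∈ D, qbar v = q v ∧ tbar v = t v) := by
  classical
  have hdotcont : Continuous fun x : (Fin n → ℝ) × (Fin n → ℝ) => dot x.1 x.2 := by
    unfold dot
    exact continuous_finset_sum _ fun i _ =>
      ((continuous_apply i).comp continuous_fst).mul ((continuous_apply i).comp continuous_snd)
  set K : Set ((Fin n → ℝ) × ℝ) :=
    (Set.univ.pi fun _ : Fin n => Set.Icc (0:ℝ) 1) ×ˢ Set.Icc vlo C with hKdef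
  have hK : IsCompact K := (isCompact_univ_pi fun _ => isCompact_Icc).prod isCompact_Icc
  have key : ∀ v ∈ Dbar, ∃ p : (Fin n → ℝ) × ℝ, p ∈ K ∧
      ∃ U : Ultrafilter (Fin n → ℝ), ↑U ≤ 𝓝 v ⊓ 𝓟 D ∧
        Tendsto (fun u => (q u, t u)) U (𝓝 p) := by
    intro v hv
    have hne : (𝓝 v ⊓ 𝓟 D).NeBot := mem_closure_iff_clusterPt.mp (hdense hv)
    set U := Ultrafilter.of (𝓝 v ⊓ 𝓟 D) with hUdef
    have hU : (U : Filter _) ≤ 𝓝 v ⊓ 𝓟 D := Ultrafilter.of_le _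
    have hUD : ∀ᶠ u in (U : Filter _), u ∈ D := (hU.trans inf_le_right) (mem_principal_self D)
    have hmap : ↑(U.map (fun u => (q u, t u))) ≤ 𝓟 K := by
      rw [Ultrafilter.coe_map, le_principal_iff, Filter.mem_map]
      filter_upwards [hUD] with u hu
      refine ⟨Set.mem_univ_pi.mpr fun i => hq01 u hu i, htbdd u hu⟩
    obtain ⟨p, hpK, hp⟩ := hK.ultrafilter_le_nhds _ hmap
    exact ⟨p, hpK, U, hU, hp⟩
  choose! p hpK U hUle hUt using key
  set qbar : (Fin n → ℝ) → Fin n → ℝ := fun v => if v ∈ D then q v else (p v).1 with hqbar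
  set tbar : (Fin n → ℝ) → ℝ := fun v => if v ∈ D then t v else (p v).2 with htbar
  -- auxiliary tendsto facts for v ∈ Dbar
  have hUv : ∀ v ∈ Dbar, Tendsto (fun u => u) (U v) (𝓝 v) :=
    fun v hv => (hUle v hv).trans inf_le_left
  have hUD : ∀ v ∈ Dbar, ∀ᶠ u in (U v : Filter _), u ∈ D :=
    fun v hv => ((hUle v hv).trans inf_le_right) (mem_principal_self D)
  have hq_tendsto : ∀ v ∈ Dbar, Tendsto q (U v) (𝓝 (p v).1) :=
    fun v hv => (continuous_fst.tendsto _).comp (hUt v hv)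
  have ht_tendsto : ∀ v ∈ Dbar, Tendsto t (U v) (𝓝 (p v).2) :=
    fun v hv => (continuous_snd.tendsto _).comp (hUt v hv)
  -- step 1: IC against points of D
  have step1 : ∀ v ∈ Dbar, ∀ w ∈ D, dot v (qbar v) - tbar v ≥ dot v (q w) - t w := by
    intro v hv w hw
    by_cases hvD : v ∈ D
    · simp only [hqbar, htbar, if_pos hvD]
      exact hIC v hvD w hw
    · simp only [hqbar, htbar, if_neg hvD]
      have h1 : Tendsto (fun u => dot u (q w) - t w) (U v) (𝓝 (dot v (q w) - t w)) :=
        ((hdotcont.tendsto (v, q w)).comp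
          ((hUv v hv).prodMk_nhds tendsto_const_nhds)).sub tendsto_const_nhds
      have h2 : Tendsto (fun u => dot u (q u) - t u) (U v) (𝓝 (dot v (p v).1 - (p v).2)) :=
        ((hdotcont.tendsto (v, (p v).1)).comp
          ((hUv v hv).prodMk_nhds (hq_tendsto v hv))).sub (ht_tendsto v hv)
      refine le_of_tendsto_of_tendsto h1 h2 ?_
      filter_upwards [hUD v hv] with u hu
      exact hIC u hu w hw
  refine ⟨qbar, tbar, ?_, ?_, ?_, ?_⟩
  · intro v hv i
    by_cases hvD : v ∈ D
    · simp only [hqbar, if_pos hvD]; exact hq01 v hvD i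
    · simp only [hqbar, if_neg hvD]
      exact Set.mem_univ_pi.mp (hpK v hv).1 i
  · intro v hv v' hv'
    by_cases hv'D : v' ∈ D
    · have := step1 v hv v' hv'D
      simpa only [hqbar, htbar, if_pos hv'D] using this
    · simp only [hqbar, htbar, if_neg hv'D]
      have h2 : Tendsto (fun u => dot v (q u) - t u) (U v')
          (𝓝 (dot v (p v').1 - (p v').2)) :=
        ((hdotcont.tendsto (v, (p v').1)).comp
          (tendsto_const_nhds.prodMk_nhds (hq_tendsto v' hv'))).sub (ht_tendsto v' hv')
      refine le_of_tendsto h2 ?_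
      filter_upwards [hUD v' hv'] with u hu
      exact step1 v hv u hu
  · intro v hv
    by_cases hvD : v ∈ D
    · simp only [hqbar, htbar, if_pos hvD]; exact hIR v hvD
    · simp only [hqbar, htbar, if_neg hvD]
      have h2 : Tendsto (fun u => dot u (q u) - t u) (U v) (𝓝 (dot v (p v).1 - (p v).2)) :=
        ((hdotcont.tendsto (v, (p v).1)).comp
          ((hUv v hv).prodMk_nhds (hq_tendsto v hv))).sub (ht_tendsto v hv)
      refine ge_of_tendsto h2 ?_
      filter_upwards [hUD v hv] with u hu
      exact hIR u hu
  · intro v hv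
    constructor <;> simp only [hqbar, htbar, if_pos hv]
end
end

section
/- Let (q,t) be an IC, almost deterministic, object non-bossy mechanism on D^I with q(v) decreasing in components for every v (rank-preserving on the decreasing domain). Then for all (v_i, v_{−i}), (v̂_i, v_{−i}) ∈ D^I with v̂_i > v_i, the payment satisfies t(v̂_i, v_{−i}) ≥ t(v_i, v_{−i}). -/
open Finset

noncomputable section

/-- Almost deterministic allocation: at each type, all but at most one coordinate
of the allocation vector is 0 or 1. -/
def AlmostDeterministic {n : ℕ} (D : Set (Fin n → ℝ))
    (q : (Fin n → ℝ) → Fin n → ℝ) : Prop :=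
  ∀ v ∈ D, ∃ k : Fin n, ∀ j : Fin n, j ≠ k → q v j = 0 ∨ q v j = 1

/-- Object non-bossiness. -/
def ObjectNonBossy {n : ℕ} (D : Set (Fin n → ℝ))
    (q : (Fin n → ℝ) → Fin n → ℝ) : Prop :=
  ∀ v ∈ D, ∀ i : Fin n, ∀ c : ℝ, Function.update v i c ∈ D →
    q v i = q (Function.update v i c) i → q v = q (Function.update v i c)

lemma dot_update_sub {n : ℕ} (v : Fin n → ℝ) (i : Fin n) (c : ℝ) (w : Fin n → ℝ) :
    dot (Function.update v i c) w - dot v w = (c - v i) * w i := by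
  simp only [dot]
  rw [← Finset.sum_sub_distrib, Finset.sum_eq_single i]
  · simp [Function.update_self]; ring
  · intro b _ hb; simp [Function.update_of_ne hb]
  · intro h; exact absurd (Finset.mem_univ i) h

lemma key_comp {n : ℕ} (w w' : Fin n → ℝ)
    (hw'01 : ∀ m, w' m ∈ Set.Icc (0:ℝ) 1) (k : Fin n)
    (hk : ∀ m, m ≠ k → w m = 0 ∨ w m = 1)
    (hwdec : ∀ a b : Fin n, a ≤ b → w a ≥ w b)
    (i j : Fin n) (hij : i < j) (hi : w i < w' i) (hj : w' j < w j) : False := by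
  have h1 : w i < 1 := lt_of_lt_of_le hi (hw'01 i).2
  have h2 : 0 < w j := lt_of_le_of_lt (hw'01 j).1 hj
  have hwij : w j ≤ w i := hwdec i j hij.le
  have hik : i = k := by
    by_contra h
    rcases hk i h with h0 | h1' <;> linarith
  have hjk : j = k := by
    by_contra h
    rcases hk j h with h0 | h1' <;> linarith
  exact absurd (hik.trans hjk.symm) hij.ne

/-- for an IC, almost deterministic, object non-bossy mechanism with
decreasing allocation vectors on the decreasing domain (with v̲ ≥ 0), payments are
monotone in each coordinate. -/
theorem almost_deterministic_payment_monotone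
    (n : ℕ) (vlo vhi : ℝ) (hvlo : 0 ≤ vlo)
    (q : (Fin n → ℝ) → Fin n → ℝ) (t : (Fin n → ℝ) → ℝ)
    (hq01 : ∀ v ∈ DI n vlo vhi, ∀ i, q v i ∈ Set.Icc (0:ℝ) 1)
    (hIC : IC (DI n vlo vhi) q t)
    (had : AlmostDeterministic (DI n vlo vhi) q)
    (hnb : ObjectNonBossy (DI n vlo vhi) q)
    (hqdec : ∀ v ∈ DI n vlo vhi, ∀ i j : Fin n, i ≤ j → q v i ≥ q v j)
    (v : Fin n → ℝ) (hv : v ∈ DI n vlo vhi)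
    (i : Fin n) (c : ℝ) (hc : c > v i)
    (hv' : Function.update v i c ∈ DI n vlo vhi) :
    t (Function.update v i c) ≥ t v := by
  set v' := Function.update v i c with hv'def
  have h1 := hIC v hv v' hv'
  have h2 := hIC v' hv' v hv
  have e1 : dot v' (q v') - dot v (q v') = (c - v i) * q v' i := dot_update_sub v i c (q v')
  have e2 : dot v' (q v) - dot v (q v) = (c - v i) * q v i := dot_update_sub v i c (q v)
  have hprod : (c - v i) * (q v' i - q v i) ≥ 0 := by nlinarith
  have hqi : q v i ≤ q v' i := by nlinarith
  have hle : ∀ j, q v j ≤ q v' j := by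
    rcases eq_or_lt_of_le hqi with heq | hlt
    · have := hnb v hv i c hv' heq
      intro j; rw [this]
    · intro j
      by_contra h
      push_neg at h
      have hji : j ≠ i := by rintro rfl; linarith
      obtain ⟨k, hk⟩ := had v hv
      obtain ⟨k', hk'⟩ := had v' hv'
      rcases lt_or_gt_of_ne (Ne.symm hji) with hij | hij
      · exact key_comp (q v) (q v') (hq01 v' hv') k hk (hqdec v hv) i j hij hlt h
      · exact key_comp (q v') (q v) (hq01 v hv) k' hk' (hqdec v' hv') j i hij h hlt
  have hdot : dot v (q v) ≤ dot v (q v') := by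
    apply Finset.sum_le_sum
    intro j _
    have hvj : 0 ≤ v j := le_trans hvlo (hv.1 j).1
    exact mul_le_mul_of_nonneg_left (hle j) hvj
  linarith
end
end
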